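/- Let x ∈ ℝ⁶ be nonzero with Q(x) = 0. Then the range (column space) of the matrix X(x) equals the kernel of conj(X(x)), this subspace has complex dimension 2, and it is totally isotropic with respect to the pseudo-Hermitian form: (X(x)u | X(x)v) = 0 for all u, v ∈ ℂ⁴. -/

import Mathlib

open Matrix Complex

/-- The six antilinear-Clifford matrices Γ₁,…,Γ₆ (indexed 0,…,5). -/
noncomputable def Gam : Fin 6 → Matrix (Fin 4) (Fin 4) ℂ
  | 0 => !![0, 0, I, 0; 0, 0, 0, -I; I, 0, 0, 0; 0, -I, 0, 0]
  | 1 => !![0, 0, 1, 0; 0, 0, 0, 1; 1, 0, 0, 0; 0, 1, 0, 0]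
  | 2 => !![0, 0, 0, -I; 0, 0, -I, 0; 0, -I, 0, 0; -I, 0, 0, 0]
  | 3 => !![0, I, 0, 0; -I, 0, 0, 0; 0, 0, 0, I; 0, 0, -I, 0]
  | 4 => !![0, 0, 0, -1; 0, 0, 1, 0; 0, 1, 0, 0; -1, 0, 0, 0]
  | 5 => !![0, 1, 0, 0; -1, 0, 0, 0; 0, 0, 0, -1; 0, 0, 1, 0]

/-- X(x) = Σ x^α Γ_α. -/
noncomputable def Xm (x : Fin 6 → ℝ) : Matrix (Fin 4) (Fin 4) ℂ :=
  ∑ α : Fin 6, (x α : ℂ) • Gam α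

/-- The quadratic form of signature (4,2). -/
def Qform (x : Fin 6 → ℝ) : ℝ :=
  x 0 ^ 2 + x 1 ^ 2 + x 2 ^ 2 - x 3 ^ 2 + x 4 ^ 2 - x 5 ^ 2

/-- The bilinear form of signature (4,2). -/
def Qbil (x y : Fin 6 → ℝ) : ℝ :=
  x 0 * y 0 + x 1 * y 1 + x 2 * y 2 - x 3 * y 3 + x 4 * y 4 - x 5 * y 5

/-- G = diag(1,1,-1,-1) as a function. -/
def Gv : Fin 4 → ℝ := ![1, 1, -1, -1]

/-- The pseudo-Hermitian form of signature (2,2) on ℂ⁴. -/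
def herm (u v : Fin 4 → ℂ) : ℂ :=
  u 0 * starRingEnd ℂ (v 0) + u 1 * starRingEnd ℂ (v 1)
    - u 2 * starRingEnd ℂ (v 2) - u 3 * starRingEnd ℂ (v 3)

/-- The Levi-Civita symbol on four indices, ε^{0123} = 1. -/
noncomputable def eps (i j k l : Fin 4) : ℝ :=
  (((j : ℕ) : ℝ) - ((i : ℕ) : ℝ)) * (((k : ℕ) : ℝ) - ((i : ℕ) : ℝ)) *
    (((l : ℕ) : ℝ) - ((i : ℕ) : ℝ)) * (((k : ℕ) : ℝ) - ((j : ℕ) : ℝ)) *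
    (((l : ℕ) : ℝ) - ((j : ℕ) : ℝ)) * (((l : ℕ) : ℝ) - ((k : ℕ) : ℝ)) / 12

/-- The six antisymmetric matrices Σ₁,…,Σ₆ (indexed 0,…,5). -/
noncomputable def Sig : Fin 6 → Matrix (Fin 4) (Fin 4) ℂ
  | 0 => !![0, 0, -I, 0; 0, 0, 0, I; I, 0, 0, 0; 0, -I, 0, 0]
  | 1 => !![0, 0, -1, 0; 0, 0, 0, -1; 1, 0, 0, 0; 0, 1, 0, 0]
  | 2 => !![0, 0, 0, I; 0, 0, I, 0; 0, -I, 0, 0; -I, 0, 0, 0]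
  | 3 => !![0, I, 0, 0; -I, 0, 0, 0; 0, 0, 0, -I; 0, 0, I, 0]
  | 4 => !![0, 0, 0, 1; 0, 0, -1, 0; 0, 1, 0, 0; -1, 0, 0, 0]
  | 5 => !![0, 1, 0, 0; -1, 0, 0, 0; 0, 0, 0, 1; 0, 0, -1, 0]

/-- Σ(x) = Σ x^α Σ_α. -/
noncomputable def Sm (x : Fin 6 → ℝ) : Matrix (Fin 4) (Fin 4) ℂ :=
  ∑ α : Fin 6, (x α : ℂ) • Sig α

/-- The antilinear Hodge star on antisymmetric 4×4 complex matrices. -/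
noncomputable def hstar (A : Matrix (Fin 4) (Fin 4) ℂ) : Matrix (Fin 4) (Fin 4) ℂ :=
  Matrix.of fun i j =>
    (1 / 2 : ℂ) * ∑ k : Fin 4, ∑ l : Fin 4,
      ((eps i j k l : ℝ) : ℂ) * ((Gv k : ℝ) : ℂ) * ((Gv l : ℝ) : ℂ) * starRingEnd ℂ (A k l)


private lemma Xm_eq (x : Fin 6 → ℝ) :
    Xm x = !![0, (x 5:ℂ) + (x 3:ℂ)*I, (x 1:ℂ) + (x 0:ℂ)*I, -(x 4:ℂ) - (x 2:ℂ)*I;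
              -(x 5:ℂ) - (x 3:ℂ)*I, 0, (x 4:ℂ) - (x 2:ℂ)*I, (x 1:ℂ) - (x 0:ℂ)*I;
              (x 1:ℂ) + (x 0:ℂ)*I, (x 4:ℂ) - (x 2:ℂ)*I, 0, -(x 5:ℂ) + (x 3:ℂ)*I;
              -(x 4:ℂ) - (x 2:ℂ)*I, (x 1:ℂ) - (x 0:ℂ)*I, (x 5:ℂ) - (x 3:ℂ)*I, 0] := by
  ext i j
  rw [Xm]
  simp only [Matrix.sum_apply, Matrix.smul_apply, smul_eq_mul, Fin.sum_univ_six]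
  fin_cases i <;> fin_cases j <;> simp [Gam, Matrix.vecHead, Matrix.vecTail] <;> ring

private lemma Xm_conj_eq (x : Fin 6 → ℝ) :
    (Xm x).map (starRingEnd ℂ) =
      !![0, (x 5:ℂ) - (x 3:ℂ)*I, (x 1:ℂ) - (x 0:ℂ)*I, -(x 4:ℂ) + (x 2:ℂ)*I;
         -(x 5:ℂ) + (x 3:ℂ)*I, 0, (x 4:ℂ) + (x 2:ℂ)*I, (x 1:ℂ) + (x 0:ℂ)*I;
         (x 1:ℂ) - (x 0:ℂ)*I, (x 4:ℂ) + (x 2:ℂ)*I, 0, -(x 5:ℂ) - (x 3:ℂ)*I;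
         -(x 4:ℂ) + (x 2:ℂ)*I, (x 1:ℂ) + (x 0:ℂ)*I, (x 5:ℂ) + (x 3:ℂ)*I, 0] := by
  rw [Xm_eq]
  ext i j
  fin_cases i <;> fin_cases j <;>
    simp [Matrix.map_apply, map_add, map_sub, _root_.map_mul, map_neg,
      Complex.conj_ofReal] <;> ring_nf

private lemma Xm_BA (x : Fin 6 → ℝ)
    (hQr : x 0 ^ 2 + x 1 ^ 2 + x 2 ^ 2 - x 3 ^ 2 + x 4 ^ 2 - x 5 ^ 2 = 0) :
    (Xm x).map (starRingEnd ℂ) * Xm x = 0 := by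
  rw [Xm_conj_eq, Xm_eq]
  ext i j
  fin_cases i <;> fin_cases j <;>
    · simp [Matrix.mul_apply, Fin.sum_univ_four]
      apply Complex.ext <;> simp <;> ring_nf <;> linarith [hQr]

private lemma Xm_key (x : Fin 6 → ℝ)
    (hQr : x 0 ^ 2 + x 1 ^ 2 + x 2 ^ 2 - x 3 ^ 2 + x 4 ^ 2 - x 5 ^ 2 = 0) :
    ∀ j k : Fin 4,
      (∑ i : Fin 4, ((Gv i : ℝ) : ℂ) * Xm x i j * starRingEnd ℂ (Xm x i k)) = 0 := by
  intro j k
  rw [Xm_eq]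
  fin_cases j <;> fin_cases k <;>
    · simp only [Fin.sum_univ_four, Gv]
      simp [map_add, map_sub, _root_.map_mul, map_neg, Complex.conj_ofReal]
      apply Complex.ext <;> simp <;> ring_nf <;> linarith [hQr]

private lemma two_le_rank {V : Submodule ℂ (Fin 4 → ℂ)} {w1 w2 : Fin 4 → ℂ}
    (h1 : w1 ∈ V) (h2 : w2 ∈ V) (a b : Fin 4)
    (hdet : w1 a * w2 b - w1 b * w2 a ≠ 0) : 2 ≤ Module.finrank ℂ V := by
  have hind : LinearIndependent ℂ ![w1, w2] := by
    rw [LinearIndependent.pair_iff]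
    intro s t hst
    have ha := congrFun hst a
    have hb := congrFun hst b
    simp only [Pi.add_apply, Pi.smul_apply, smul_eq_mul, Pi.zero_apply] at ha hb
    have hs : s * (w1 a * w2 b - w1 b * w2 a) = 0 := by
      linear_combination w2 b * ha - w2 a * hb
    have ht : t * (w1 a * w2 b - w1 b * w2 a) = 0 := by
      linear_combination w1 a * hb - w1 b * ha
    exact ⟨by rcases mul_eq_zero.1 hs with h | h; exact h; exact absurd h hdet,
           by rcases mul_eq_zero.1 ht with h | h; exact h; exact absurd h hdet⟩
  have hind' : LinearIndependent ℂ
      (fun i : Fin 2 => (![(⟨w1, h1⟩ : V), ⟨w2, h2⟩] : Fin 2 → V) i) := by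
    apply LinearIndependent.of_comp V.subtype
    have : (V.subtype ∘ fun i : Fin 2 => (![(⟨w1, h1⟩ : V), ⟨w2, h2⟩] : Fin 2 → V) i)
        = ![w1, w2] := by
      funext i; fin_cases i <;> rfl
    rw [this]; exact hind
  simpa using hind'.fintype_card_le_finrank

private lemma Xm_two_le (x : Fin 6 → ℝ) (hx : x ≠ 0) :
    2 ≤ Module.finrank ℂ (LinearMap.range (Xm x).mulVecLin) := by
  have hcol : ∀ u : Fin 4 → ℂ, (Xm x).mulVec u ∈ LinearMap.range (Xm x).mulVecLin :=
    fun u => ⟨u, Matrix.mulVecLin_apply _ _⟩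
  obtain ⟨α, hα⟩ : ∃ α, x α ≠ 0 := by
    by_contra h; push_neg at h; exact hx (funext h)
  have hcase : ((x 1:ℂ) + (x 0:ℂ)*I ≠ 0) ∨ (-(x 4:ℂ) - (x 2:ℂ)*I ≠ 0) ∨
      ((x 5:ℂ) + (x 3:ℂ)*I ≠ 0) := by
    fin_cases α
    · exact Or.inl (by intro h; rw [Complex.ext_iff] at h; simp at h; exact hα h.2)
    · exact Or.inl (by intro h; rw [Complex.ext_iff] at h; simp at h; exact hα h.1)
    · exact Or.inr (Or.inl (by intro h; rw [Complex.ext_iff] at h; simp at h; exact hα h.2))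
    · exact Or.inr (Or.inr (by intro h; rw [Complex.ext_iff] at h; simp at h; exact hα h.2))
    · exact Or.inr (Or.inl (by intro h; rw [Complex.ext_iff] at h; simp at h; exact hα h.1))
    · exact Or.inr (Or.inr (by intro h; rw [Complex.ext_iff] at h; simp at h; exact hα h.1))
  rcases hcase with hp | hr | ht
  · refine two_le_rank (hcol ![1,0,0,0]) (hcol ![0,0,1,0]) 0 2 ?_
    have he : (Xm x).mulVec ![1,0,0,0] 0 * (Xm x).mulVec ![0,0,1,0] 2 -
        (Xm x).mulVec ![1,0,0,0] 2 * (Xm x).mulVec ![0,0,1,0] 0 =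
        -(((x 1:ℂ) + (x 0:ℂ)*I) * ((x 1:ℂ) + (x 0:ℂ)*I)) := by
      rw [Xm_eq]; simp [Matrix.mulVec, dotProduct, Fin.sum_univ_four]; try ring
    rw [he]
    exact neg_ne_zero.2 (mul_ne_zero hp hp)
  · refine two_le_rank (hcol ![1,0,0,0]) (hcol ![0,0,0,1]) 0 3 ?_
    have he : (Xm x).mulVec ![1,0,0,0] 0 * (Xm x).mulVec ![0,0,0,1] 3 -
        (Xm x).mulVec ![1,0,0,0] 3 * (Xm x).mulVec ![0,0,0,1] 0 =
        -((-(x 4:ℂ) - (x 2:ℂ)*I) * (-(x 4:ℂ) - (x 2:ℂ)*I)) := by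
      rw [Xm_eq]; simp [Matrix.mulVec, dotProduct, Fin.sum_univ_four]; try ring
    rw [he]
    exact neg_ne_zero.2 (mul_ne_zero hr hr)
  · refine two_le_rank (hcol ![1,0,0,0]) (hcol ![0,1,0,0]) 0 1 ?_
    have he : (Xm x).mulVec ![1,0,0,0] 0 * (Xm x).mulVec ![0,1,0,0] 1 -
        (Xm x).mulVec ![1,0,0,0] 1 * (Xm x).mulVec ![0,1,0,0] 0 =
        ((x 5:ℂ) + (x 3:ℂ)*I) * ((x 5:ℂ) + (x 3:ℂ)*I) := by
      rw [Xm_eq]; simp [Matrix.mulVec, dotProduct, Fin.sum_univ_four]; try ring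
    rw [he]
    exact mul_ne_zero ht ht

private lemma herm_mulVec_eq (A : Matrix (Fin 4) (Fin 4) ℂ) (u v : Fin 4 → ℂ) :
    herm (A.mulVec u) (A.mulVec v) =
      ∑ j : Fin 4, ∑ k : Fin 4,
        (∑ i : Fin 4, ((Gv i : ℝ) : ℂ) * A i j * starRingEnd ℂ (A i k)) * u j
          * starRingEnd ℂ (v k) := by
  simp only [herm, Matrix.mulVec, dotProduct, Fin.sum_univ_four,
    map_add, _root_.map_mul, Gv]
  norm_num
  simp only [Matrix.cons_val_two, Matrix.cons_val_three, Matrix.vecHead, Matrix.vecTail, Function.comp, Fin.succ_zero_eq_one, Fin.succ_one_eq_two, Matrix.cons_val_zero, Matrix.cons_val_one]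
  push_cast
  ring

section
open ComplexOrder

private lemma rank_map_conj (A : Matrix (Fin 4) (Fin 4) ℂ) :
    (A.map (starRingEnd ℂ)).rank = A.rank := by
  have hBH : (A.map (starRingEnd ℂ))ᴴ = Aᵀ := by
    ext i j
    simp [Matrix.conjTranspose_apply, Matrix.map_apply, Matrix.transpose_apply]
  calc (A.map (starRingEnd ℂ)).rank = ((A.map (starRingEnd ℂ))ᴴ).rank :=
        (Matrix.rank_conjTranspose _).symm
    _ = A.rank := by rw [hBH, Matrix.rank_transpose]

end

/-- For nonzero null x, the range of X(x) equals the kernel of conj(X(x)), has complex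
dimension 2, and is totally isotropic for the (2,2) pseudo-Hermitian form. -/
theorem range_X_eq_ker_conjX (x : Fin 6 → ℝ) (hx : x ≠ 0) (hQ : Qform x = 0) :
    LinearMap.range (Xm x).mulVecLin =
        LinearMap.ker ((Xm x).map (starRingEnd ℂ)).mulVecLin ∧
      Module.finrank ℂ (LinearMap.range (Xm x).mulVecLin) = 2 ∧
      ∀ u v : Fin 4 → ℂ, herm ((Xm x).mulVec u) ((Xm x).mulVec v) = 0 := by
  have hQr := hQ
  rw [Qform] at hQr
  have hBA := Xm_BA x hQr
  have hsub : LinearMap.range (Xm x).mulVecLin ≤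
      LinearMap.ker ((Xm x).map (starRingEnd ℂ)).mulVecLin := by
    rintro w ⟨u, rfl⟩
    simp only [LinearMap.mem_ker, Matrix.mulVecLin_apply, Matrix.mulVec_mulVec, hBA,
      Matrix.zero_mulVec]
  have hge := Xm_two_le x hx
  have hrk := rank_map_conj (Xm x)
  have hrnB := LinearMap.finrank_range_add_finrank_ker ((Xm x).map (starRingEnd ℂ)).mulVecLin
  rw [Module.finrank_fin_fun] at hrnB
  have hrankA : (Xm x).rank = Module.finrank ℂ (LinearMap.range (Xm x).mulVecLin) := rfl
  have hrankB : ((Xm x).map (starRingEnd ℂ)).rank =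
      Module.finrank ℂ (LinearMap.range ((Xm x).map (starRingEnd ℂ)).mulVecLin) := rfl
  have hmono := Submodule.finrank_mono hsub
  have heq : Module.finrank ℂ (LinearMap.range (Xm x).mulVecLin) =
      Module.finrank ℂ (LinearMap.ker ((Xm x).map (starRingEnd ℂ)).mulVecLin) := by
    omega
  refine ⟨Submodule.eq_of_le_of_finrank_eq hsub heq, by omega, ?_⟩
  intro u v
  rw [herm_mulVec_eq]
  refine Finset.sum_eq_zero fun j _ => Finset.sum_eq_zero fun k _ => ?_
  rw [Xm_key x hQr j k]
  ring
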